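/- Let m, n, p be positive integers with p > m and n ≥ p, and let c be a real number satisfying max{−2, n·(n−p+m)/(n+p−m) − m − 1} < c < n − 2m. Set k₀ = (n − (m+c+1))/n, so that 0 < k₀ < 1. Then for all reals f₁ > f₂ > ⋯ > f_m > 0, setting g_i = 1/(1+(1−k₀)·f_i) and d_i = n−p+2i−1, one has (1/n)·∑_{i=1}^{m} [ d_i·k₀·f_i·g_i − 2·k₀·f_i·g_i² − 2·k₀·∑_{j=i+1}^{m} f_j·g_i·g_j − n·log(1 + k₀·f_i·g_i) ] ≤ 0. -/

import Mathlib

set_option maxHeartbeats 1000000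

/-- Padé-type lower bound for the logarithm: `2(x-1)/(x+1) ≤ log x` for `x ≥ 1`. -/
lemma log_pade_aux {x : ℝ} (hx : 1 ≤ x) : 2*(x-1)/(x+1) ≤ Real.log x := by
  set F : ℝ → ℝ := fun t => Real.log t + 4*(t+1)⁻¹ with hF
  have hder : ∀ y : ℝ, 1 ≤ y → HasDerivAt F (y⁻¹ + 4*(-1/(y+1)^2)) y := by
    intro y hy
    have hy0 : y ≠ 0 := by intro h; rw [h] at hy; norm_num at hy
    have hy1 : y + 1 ≠ 0 := by intro h; nlinarith
    have h1 : HasDerivAt Real.log y⁻¹ y := Real.hasDerivAt_log hy0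
    have h2 : HasDerivAt (fun t : ℝ => t+1) 1 y := (hasDerivAt_id y).add_const 1
    have h3 : HasDerivAt (fun t : ℝ => (t+1)⁻¹) (-1/(y+1)^2) y := by
      exact h2.inv hy1
    exact h1.add (h3.const_mul 4)
  have hmono : MonotoneOn F (Set.Ici 1) := by
    apply monotoneOn_of_deriv_nonneg (convex_Ici 1)
    · intro y hy
      exact ((hder y hy).continuousAt.continuousWithinAt)
    · intro y hy
      rw [interior_Ici] at hy
      exact ((hder y hy.le).differentiableAt.differentiableWithinAt)
    · intro y hy
      rw [interior_Ici] at hy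
      rw [(hder y hy.le).deriv]
      have hy0 : (0:ℝ) < y := by linarith [(Set.mem_Ioi.mp hy).le]
      have hy1 : (0:ℝ) < (y+1)^2 := by positivity
      have h3 : 4/(y+1)^2 ≤ y⁻¹ := by
        rw [inv_eq_one_div, div_le_div_iff₀ hy1 hy0]
        nlinarith [sq_nonneg (y-1)]
      have h4 : 4*(-1/(y+1)^2) = -(4/(y+1)^2) := by ring
      linarith
  have h1x : F 1 ≤ F x := hmono Set.self_mem_Ici hx hx
  have hF1 : F 1 = 2 := by
    simp [hF, Real.log_one]
    norm_num
  have hx1 : (0:ℝ) < x + 1 := by linarith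
  have hFx : 2 ≤ Real.log x + 4*(x+1)⁻¹ := by rw [hF1] at h1x; exact h1x
  rw [div_le_iff₀ hx1]
  have h5 := mul_le_mul_of_nonneg_right hFx hx1.le
  have hinv : (x+1)*(x+1)⁻¹ = 1 := mul_inv_cancel₀ hx1.ne'
  nlinarith [h5, hinv]

/-- Pointwise bound via concavity of the logarithm. -/
lemma pointwise_aux {A B nn M t : ℝ} (hM : 0 < M) (ht0 : 0 ≤ t) (htM : t ≤ M)
    (hB : 0 ≤ B) (hnn : 0 ≤ nn)
    (hkey : A*M + B*M^2 ≤ nn * Real.log (1+M)) :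
    A*t + B*t^2 ≤ nn * Real.log (1+t) := by
  set s := t/M with hs
  have hs0 : 0 ≤ s := div_nonneg ht0 hM.le
  have hs1 : s ≤ 1 := (div_le_one hM).mpr htM
  have hts : t = s*M := by rw [hs]; field_simp
  have hb : (1+M)^s ≤ 1+s*M :=
    rpow_one_add_le_one_add_mul_self (by linarith) hs0 hs1
  have hlog : s * Real.log (1+M) ≤ Real.log (1+t) := by
    have hpos : (0:ℝ) < (1+M)^s := Real.rpow_pos_of_pos (by linarith) s
    have h2 := Real.log_le_log hpos hb
    rwa [Real.log_rpow (by linarith), ← hts] at h2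
  have hs2 : s^2 ≤ s := by nlinarith
  have e1 : A*t = s*(A*M) := by rw [hts]; ring
  have e2 : B*t^2 ≤ s*(B*M^2) := by
    rw [hts]
    nlinarith [mul_le_mul_of_nonneg_left hs2 (mul_nonneg hB (sq_nonneg M))]
  calc A*t + B*t^2 ≤ s*(A*M) + s*(B*M^2) := by rw [e1]; linarith
    _ = s*(A*M + B*M^2) := by ring
    _ ≤ s*(nn*Real.log (1+M)) := mul_le_mul_of_nonneg_left hkey hs0
    _ = nn*(s*Real.log (1+M)) := by ring
    _ ≤ nn*Real.log (1+t) := mul_le_mul_of_nonneg_left hlog hnn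

/-- Off-diagonal square identity. -/
lemma offdiag_aux {m : ℕ} (t : Fin m → ℝ) :
    2 * ∑ i, t i * ∑ j ∈ Finset.univ.filter (fun j => i < j), t j
      = (∑ i, t i)^2 - ∑ i, t i ^ 2 := by
  classical
  have hsq : (∑ i, t i)^2 = ∑ i : Fin m, ∑ j : Fin m, t i * t j := by
    rw [sq, Finset.sum_mul_sum]
  have hsplit : ∀ i : Fin m, (∑ j : Fin m, t i * t j)
      = (∑ j ∈ Finset.univ.filter (fun j => i < j), t i * t j)
        + (t i ^ 2 + ∑ j ∈ Finset.univ.filter (fun j => j < i), t i * t j) := by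
    intro i
    rw [← Finset.sum_filter_add_sum_filter_not Finset.univ (fun j => i < j) (fun j => t i * t j)]
    congr 1
    have hset : Finset.univ.filter (fun j => ¬ i < j)
        = insert i (Finset.univ.filter (fun j => j < i)) := by
      ext x
      simp only [Finset.mem_filter, Finset.mem_univ, true_and, Finset.mem_insert, not_lt]
      constructor
      · intro h
        rcases lt_or_eq_of_le h with h' | h'
        · exact Or.inr h'
        · exact Or.inl h'
      · rintro (rfl | h)
        · exact le_refl _
        · exact h.le
    rw [hset, Finset.sum_insert (by simp)]
    rw [sq]
  have hswap : (∑ i : Fin m, ∑ j ∈ Finset.univ.filter (fun j => j < i), t i * t j)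
      = ∑ i : Fin m, ∑ j ∈ Finset.univ.filter (fun j => i < j), t i * t j := by
    rw [Finset.sum_comm' (t' := Finset.univ)
      (s' := fun y => Finset.univ.filter (fun x => y < x)) (by intro x y; simp)]
    exact Finset.sum_congr rfl fun i _ => Finset.sum_congr rfl fun j _ => mul_comm _ _
  have hmulsum : (∑ i, t i * ∑ j ∈ Finset.univ.filter (fun j => i < j), t j)
      = ∑ i : Fin m, ∑ j ∈ Finset.univ.filter (fun j => i < j), t i * t j :=
    Finset.sum_congr rfl fun i _ => Finset.mul_sum _ _ _
  have h1 : (∑ i, t i)^2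
      = (∑ i : Fin m, ∑ j ∈ Finset.univ.filter (fun j => i < j), t i * t j)
        + ((∑ i, t i ^ 2)
          + ∑ i : Fin m, ∑ j ∈ Finset.univ.filter (fun j => j < i), t i * t j) := by
    rw [hsq, Finset.sum_congr rfl fun i _ => hsplit i, Finset.sum_add_distrib,
      Finset.sum_add_distrib]
  rw [hmulsum]
  linarith [h1, hswap]

/-- Counting identity: summing the "later" elements equals weighting by index. -/
lemma count_aux {m : ℕ} (t : Fin m → ℝ) :
    (∑ i : Fin m, ∑ j ∈ Finset.univ.filter (fun j => i < j), t j)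
      = ∑ i : Fin m, ((i : ℕ) : ℝ) * t i := by
  classical
  rw [Finset.sum_comm' (t' := Finset.univ)
    (s' := fun y => Finset.univ.filter (fun x => x < y)) (by intro x y; simp)]
  refine Finset.sum_congr rfl fun j _ => ?_
  rw [Finset.sum_const, nsmul_eq_mul]
  congr 1
  have hset : Finset.univ.filter (fun x : Fin m => x < j) = Finset.Iio j := by
    ext x; simp
  rw [hset]
  rw [Fin.card_Iio]

/-- Corollary 4.2 (deterministic content): for `p > m`, `n ≥ p` and
`max{−2, n(n−p+m)/(n+p−m) − m − 1} < c < n − 2m`, setting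
`k₀ = (n − (m+c+1))/n`, one has `0 < k₀ < 1` and the unbiased estimate of the
Stein-loss risk difference of the generalized Bayes covariance estimator is
nonpositive. -/
theorem stmt_13 (m n p : ℕ) (hm : 0 < m) (hp : p > m) (hn : n ≥ p)
    (c : ℝ)
    (hc1 : max (-2 : ℝ) ((n : ℝ) * ((n : ℝ) - p + m) / ((n : ℝ) + p - m) - m - 1) < c)
    (hc2 : c < (n : ℝ) - 2 * m)
    (k₀ : ℝ) (hk₀ : k₀ = ((n : ℝ) - (m + c + 1)) / n) :
    (0 < k₀ ∧ k₀ < 1) ∧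
    ∀ (f : Fin m → ℝ), (∀ i, 0 < f i) → (∀ i j : Fin m, i < j → f j < f i) →
      ∀ (g : Fin m → ℝ), (∀ i, g i = 1 / (1 + (1 - k₀) * f i)) →
      ∀ (d : Fin m → ℝ), (∀ i, d i = (n : ℝ) - p + 2 * ((i : ℕ) + 1) - 1) →
      (1 / (n : ℝ)) * ∑ i : Fin m,
          (d i * k₀ * f i * g i - 2 * k₀ * f i * g i ^ 2
            - 2 * k₀ * ∑ j ∈ Finset.univ.filter (fun j => i < j), f j * g i * g j
            - n * Real.log (1 + k₀ * f i * g i)) ≤ 0 := by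
  classical
  have hmn : m < n := lt_of_lt_of_le hp hn
  have hmR : (1:ℝ) ≤ (m:ℝ) := by exact_mod_cast hm
  have hmpR : (m:ℝ) < (p:ℝ) := by exact_mod_cast hp
  have hpnR : (p:ℝ) ≤ (n:ℝ) := by exact_mod_cast hn
  have hn0 : (0:ℝ) < (n:ℝ) := by
    have : 0 < n := lt_trans hm hmn
    exact_mod_cast this
  have hcneg2 : (-2:ℝ) < c := lt_of_le_of_lt (le_max_left _ _) hc1
  have hk0pos : 0 < k₀ := by
    rw [hk₀]
    apply div_pos _ hn0
    linarith
  have hk0lt1 : k₀ < 1 := by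
    rw [hk₀, div_lt_one hn0]
    linarith
  refine ⟨⟨hk0pos, hk0lt1⟩, ?_⟩
  intro f hf _hf' g hg d hd
  -- basic quantities
  set β : ℝ := 1 - k₀ with hβ
  have hβ0 : 0 < β := by rw [hβ]; linarith
  have hβ1 : β < 1 := by rw [hβ]; linarith
  set r : ℝ := β / k₀ with hr
  have hr0 : 0 ≤ r := le_of_lt (div_pos hβ0 hk0pos)
  set M : ℝ := k₀ / β with hM
  have hM0 : 0 < M := div_pos hk0pos hβ0
  have hrM : r * M = 1 := by
    rw [hr, hM]
    field_simp
  -- the key endpoint inequality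
  have hnβ : (n:ℝ) * β = (m:ℝ) + c + 1 := by
    rw [hβ, hk₀]
    field_simp
    ring
  have hD : (0:ℝ) < (n:ℝ) + p - m := by linarith
  have hc1' : (n:ℝ) * ((n:ℝ) - p + m) / ((n:ℝ) + p - m) - m - 1 < c :=
    lt_of_le_of_lt (le_max_right _ _) hc1
  have hΔ : (n:ℝ) * ((n:ℝ) - p + m) < ((m:ℝ) + c + 1) * ((n:ℝ) + p - m) := by
    have h' : (n:ℝ) * ((n:ℝ) - p + m) / ((n:ℝ) + p - m) < (m:ℝ) + c + 1 := by linarith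
    exact (div_lt_iff₀ hD).mp h'
  have hΔβ : ((n:ℝ) - p + m) < β * ((n:ℝ) + p - m) := by
    rw [← hnβ] at hΔ
    have h2 : (n:ℝ) * ((n:ℝ) - p + m) < (n:ℝ) * (β * ((n:ℝ) + p - m)) := by nlinarith [hΔ]
    exact lt_of_mul_lt_mul_left h2 hn0.le
  have h2k : (0:ℝ) < 1 + β := by linarith
  have hxβ : (1:ℝ) ≤ 1/β := by
    rw [le_div_iff₀ hβ0, one_mul]; linarith
  have hlogβ : 2*(1-β)/(1+β) ≤ Real.log (1/β) := by
    have h := log_pade_aux hxβ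
    have heq : 2*(1/β-1)/(1/β+1) = 2*(1-β)/(1+β) := by
      have hpos1 : (0:ℝ) < 1/β + 1 := by
        have := one_div_pos.mpr hβ0
        linarith
      rw [div_eq_div_iff (ne_of_gt hpos1) (ne_of_gt h2k)]
      field_simp
    rwa [heq] at h
  have h1M : 1 + M = 1/β := by
    rw [hM]
    field_simp
    linarith
  have hstep : ((n:ℝ) - p + m) * (1 + β) ≤ 2*(n:ℝ)*β := by nlinarith [hΔβ]
  have hkeyM : ((n:ℝ) - p + m) * M ≤ (n:ℝ) * Real.log (1 + M) := by
    rw [h1M]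
    have hA : ((n:ℝ) - p + m) * M ≤ (n:ℝ) * (2*(1-β)/(1+β)) := by
      rw [hM, mul_div_assoc', mul_div_assoc', div_le_div_iff₀ hβ0 h2k]
      nlinarith [mul_le_mul_of_nonneg_left hstep hk0pos.le, hk0pos, hβ0]
    have hB : (n:ℝ) * (2*(1-β)/(1+β)) ≤ (n:ℝ) * Real.log (1/β) :=
      mul_le_mul_of_nonneg_left hlogβ hn0.le
    linarith
  have hAB : ((n:ℝ)-p-1)*M + (((m:ℝ)+1)*r)*M^2 = ((n:ℝ) - p + m)*M := by
    linear_combination (((m:ℝ)+1)*M) * hrM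
  -- per-index quantities
  set t : Fin m → ℝ := fun i => k₀ * f i * g i with ht
  have htdef : ∀ i, t i = k₀ * f i * g i := fun i => rfl
  have hβf : ∀ i, 0 < 1 + β * f i := by
    intro i
    have := hf i
    nlinarith [hβ0]
  have hgpos : ∀ i, 0 < g i := by
    intro i; rw [hg i]; exact one_div_pos.mpr (hβf i)
  have ht0 : ∀ i, 0 ≤ t i := by
    intro i
    rw [htdef i]
    exact le_of_lt (mul_pos (mul_pos hk0pos (hf i)) (hgpos i))
  have htM : ∀ i, t i ≤ M := by
    intro i
    rw [htdef i, hg i, hM, mul_one_div, div_le_div_iff₀ (hβf i) hβ0]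
    nlinarith [hf i, hk0pos, hβ0]
  have hgt : ∀ i, g i = 1 - r * t i := by
    intro i
    rw [htdef i, hg i, hr]
    field_simp [(hβf i).ne', hk0pos.ne']
    ring
  -- rewrite each summand
  have hsummand : ∀ i : Fin m,
      (d i * k₀ * f i * g i - 2 * k₀ * f i * g i ^ 2
        - 2 * k₀ * ∑ j ∈ Finset.univ.filter (fun j => i < j), f j * g i * g j
        - (n:ℝ) * Real.log (1 + k₀ * f i * g i))
      = ((n:ℝ)-(p:ℝ)+1)*t i + 2*(((i:ℕ)):ℝ)*t i - 2*t i + 2*r*t i^2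
        - 2*(∑ j ∈ Finset.univ.filter (fun j => i < j), t j)
        + 2*r*(t i * ∑ j ∈ Finset.univ.filter (fun j => i < j), t j)
        - (n:ℝ)*Real.log (1 + t i) := by
    intro i
    have hinner : k₀ * ∑ j ∈ Finset.univ.filter (fun j => i < j), f j * g i * g j
        = g i * ∑ j ∈ Finset.univ.filter (fun j => i < j), t j := by
      rw [Finset.mul_sum, Finset.mul_sum]
      exact Finset.sum_congr rfl fun j _ => by rw [htdef j]; ring
    have hlogarg : 1 + k₀ * f i * g i = 1 + t i := by rw [htdef i]
    have step1 : d i * k₀ * f i * g i - 2 * k₀ * f i * g i ^ 2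
        - 2 * k₀ * ∑ j ∈ Finset.univ.filter (fun j => i < j), f j * g i * g j
        - (n:ℝ) * Real.log (1 + k₀ * f i * g i)
        = d i * t i - 2 * t i * g i
          - 2 * (g i * ∑ j ∈ Finset.univ.filter (fun j => i < j), t j)
          - (n:ℝ) * Real.log (1 + t i) := by
      rw [hlogarg, ← hinner, htdef i]
      ring
    rw [step1, hgt i, hd i]
    push_cast
    ring
  rw [Finset.sum_congr rfl fun i _ => hsummand i]
  -- sum identities
  set T1 : ℝ := ∑ i, t i with hT1
  set T2 : ℝ := ∑ i, t i ^ 2 with hT2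
  set SL : ℝ := ∑ i, Real.log (1 + t i) with hSL
  have hcount := count_aux t
  have hoff := offdiag_aux t
  have hS : (∑ i : Fin m,
      (((n:ℝ)-(p:ℝ)+1)*t i + 2*(((i:ℕ)):ℝ)*t i - 2*t i + 2*r*t i^2
        - 2*(∑ j ∈ Finset.univ.filter (fun j => i < j), t j)
        + 2*r*(t i * ∑ j ∈ Finset.univ.filter (fun j => i < j), t j)
        - (n:ℝ)*Real.log (1 + t i)))
      = ((n:ℝ)-(p:ℝ)-1)*T1 + r*T2 + r*T1^2 - (n:ℝ)*SL := by
    simp only [Finset.sum_sub_distrib, Finset.sum_add_distrib, ← Finset.mul_sum]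
    rw [hcount]
    rw [hT1, hT2, hSL]
    have h3 : (∑ i : Fin m, 2*(((i:ℕ)):ℝ)*t i) = 2 * ∑ i : Fin m, (((i:ℕ)):ℝ)*t i := by
      rw [Finset.mul_sum]
      exact Finset.sum_congr rfl fun i _ => by ring
    linear_combination h3 + r * hoff
  rw [hS]
  -- now conclude
  have hcs : T1^2 ≤ (m:ℝ) * T2 := by
    have h := sq_sum_le_card_mul_sum_sq (s := (Finset.univ : Finset (Fin m))) (f := t)
    simpa [hT1, hT2] using h
  have hpt : ∀ i ∈ (Finset.univ : Finset (Fin m)),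
      ((n:ℝ)-(p:ℝ)-1)*t i + (((m:ℝ)+1)*r)*t i^2 ≤ (n:ℝ)*Real.log (1 + t i) := by
    intro i _
    refine pointwise_aux hM0 (ht0 i) (htM i) (by positivity) hn0.le ?_
    rw [hAB]
    exact hkeyM
  have hsum_pt := Finset.sum_le_sum hpt
  simp only [Finset.sum_add_distrib, ← Finset.mul_sum] at hsum_pt
  rw [← hT1, ← hT2, ← hSL] at hsum_pt
  have hcs' : r*T1^2 ≤ (m:ℝ)*r*T2 := by
    nlinarith [mul_le_mul_of_nonneg_left hcs hr0]
  have hfinal : ((n:ℝ)-(p:ℝ)-1)*T1 + r*T2 + r*T1^2 - (n:ℝ)*SL ≤ 0 := by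
    have e : (((m:ℝ)+1)*r)*T2 = (m:ℝ)*r*T2 + r*T2 := by ring
    linarith [hsum_pt, hcs', e]
  have hcoef : (0:ℝ) ≤ 1/(n:ℝ) := by positivity
  calc (1/(n:ℝ)) * (((n:ℝ)-(p:ℝ)-1)*T1 + r*T2 + r*T1^2 - (n:ℝ)*SL)
      ≤ (1/(n:ℝ)) * 0 := mul_le_mul_of_nonneg_left hfinal hcoef
    _ = 0 := by ring
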